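/- arXiv:1610.08885 — 2 statements merged into one kernel-verified Lean document; each statement's English description precedes it below -/
import Mathlib

section
/- Let b ∈ ℝ^n be a unit vector with all entries nonzero, let λ be the smallest eigenvalue of W(b), and let x be a unit eigenvector of W(b) for λ such that in addition W(x) b = λ b. Then λ = (1ᵀ σ* Ψ^{-1} σ* 1)^{-1}, the vector of squared entries of b satisfies (b_1², …, b_n²)ᵀ = λ · σ* Ψ^{-1} σ* 1, and x = σ* b or x = −σ* b. -/
open Matrix BigOperators Pointwise

/-- The Cauchy matrix with entries `1/(λᵢ + λⱼ)`. -/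
noncomputable def cauchyPsi (n : ℕ) (lam : Fin n → ℝ) : Matrix (Fin n) (Fin n) ℝ :=
  Matrix.of fun i j => 1 / (lam i + lam j)

/-- `W(b) = diag(b) Ψ diag(b)`. -/
noncomputable def cauchyW (n : ℕ) (lam : Fin n → ℝ) (b : Fin n → ℝ) :
    Matrix (Fin n) (Fin n) ℝ :=
  Matrix.diagonal b * cauchyPsi n lam * Matrix.diagonal b

/-- The diagonal signature matrix `σ*` with `i`-th diagonal entry `(-1)^i`. -/
noncomputable def sigmaStar (n : ℕ) : Matrix (Fin n) (Fin n) ℝ :=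
  Matrix.diagonal fun i : Fin n => (-1 : ℝ) ^ (i : ℕ)

private lemma neg_one_pow_mul_self (k : ℕ) : ((-1 : ℝ) ^ k) * ((-1 : ℝ) ^ k) = 1 := by
  rw [← pow_add]
  exact Even.neg_one_pow ⟨k, rfl⟩

private lemma cauchy_det_pos : ∀ (m : ℕ) (x y : Fin m → ℝ), StrictMono x → StrictMono y →
    (∀ i j, 0 < x i + y j) →
    0 < (Matrix.of fun i j => (x i + y j)⁻¹ : Matrix (Fin m) (Fin m) ℝ).det := by
  intro m
  induction m with
  | zero =>
    intro x y _ _ _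
    rw [Matrix.det_isEmpty]
    exact one_pos
  | succ m ih =>
    intro x y hx hy hxy
    set e : Fin m ⊕ Fin 1 ≃ Fin (m + 1) := finSumFinEquiv with he
    have hlt : ∀ i : Fin m, e (Sum.inl i) < e (Sum.inr 0) := by
      intro i
      simp only [he, finSumFinEquiv_apply_left, finSumFinEquiv_apply_right]
      rw [Fin.lt_def]
      simp only [Fin.coe_castAdd, Fin.coe_natAdd]
      omega
    have hltl : ∀ i j : Fin m, i < j → e (Sum.inl i) < e (Sum.inl j) := by
      intro i j hij
      simp only [he, finSumFinEquiv_apply_left]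
      rw [Fin.lt_def]
      simpa using hij
    set x' : Fin m → ℝ := fun i => x (e (Sum.inl i)) with hx'
    set y' : Fin m → ℝ := fun i => y (e (Sum.inl i)) with hy'
    set xl : ℝ := x (e (Sum.inr 0)) with hxl
    set yl : ℝ := y (e (Sum.inr 0)) with hyl
    have hx'm : StrictMono x' := fun i j hij => hx (hltl i j hij)
    have hy'm : StrictMono y' := fun i j hij => hy (hltl i j hij)
    have hx'lt : ∀ i, x' i < xl := fun i => hx (hlt i)
    have hy'lt : ∀ i, y' i < yl := fun i => hy (hlt i)
    have hpos' : ∀ i j, 0 < x' i + y' j := fun i j => hxy _ _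
    have hposxl : ∀ j, 0 < xl + y' j := fun j => hxy _ _
    have hposyl : ∀ i, 0 < x' i + yl := fun i => hxy _ _
    have hposll : 0 < xl + yl := hxy _ _
    set A : Matrix (Fin m) (Fin m) ℝ := Matrix.of fun i j => (x' i + y' j)⁻¹ with hA
    set B : Matrix (Fin m) (Fin 1) ℝ := Matrix.of fun i _ => (x' i + yl)⁻¹ with hB
    set C : Matrix (Fin 1) (Fin m) ℝ := Matrix.of fun _ j => (xl + y' j)⁻¹ with hC
    set D : Matrix (Fin 1) (Fin 1) ℝ := Matrix.of fun _ _ => (xl + yl)⁻¹ with hD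
    have hsub : (Matrix.of fun i j => (x i + y j)⁻¹ :
        Matrix (Fin (m+1)) (Fin (m+1)) ℝ).submatrix e e = Matrix.fromBlocks A B C D := by
      ext i j
      rcases i with i | i <;> rcases j with j | j
      · rfl
      · rw [Fin.eq_zero j]; rfl
      · rw [Fin.eq_zero i]; rfl
      · rw [Fin.eq_zero i, Fin.eq_zero j]; rfl
    have hdetD : D.det = (xl + yl)⁻¹ := by rw [Matrix.det_fin_one]; rfl
    haveI : Invertible D :=
      D.invertibleOfIsUnitDet (by rw [hdetD]; exact (inv_pos.mpr hposll).ne'.isUnit)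
    have hDinv : D⁻¹ = Matrix.of fun _ _ : Fin 1 => (xl + yl) := by
      apply Matrix.inv_eq_right_inv
      ext i j
      rw [Fin.eq_zero i, Fin.eq_zero j]
      simp only [Matrix.mul_apply, Fin.sum_univ_one, Matrix.of_apply, Matrix.one_apply_eq, hD]
      exact inv_mul_cancel₀ hposll.ne'
    set d : Fin m → ℝ := fun i => (xl - x' i) / (x' i + yl) with hdd
    set w : Fin m → ℝ := fun j => (yl - y' j) / (xl + y' j) with hww
    have hdpos : ∀ i, 0 < d i := fun i => div_pos (sub_pos.mpr (hx'lt i)) (hposyl i)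
    have hwpos : ∀ j, 0 < w j := fun j => div_pos (sub_pos.mpr (hy'lt j)) (hposxl j)
    have hschur : A - B * D⁻¹ * C = Matrix.of fun i j => d i * (w j * (x' i + y' j)⁻¹) := by
      ext i j
      simp only [hDinv, Matrix.sub_apply, Matrix.mul_apply, Fin.sum_univ_one, Matrix.of_apply,
        hA, hB, hC, hdd, hww]
      have h1 : x' i + y' j ≠ 0 := (hpos' i j).ne'
      have h2 : x' i + yl ≠ 0 := (hposyl i).ne'
      have h3 : xl + y' j ≠ 0 := (hposxl j).ne'
      field_simp
      ring
    have hfact : (Matrix.of fun i j => d i * (w j * (x' i + y' j)⁻¹) :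
        Matrix (Fin m) (Fin m) ℝ)
        = Matrix.diagonal d * (Matrix.of fun i j => (x' i + y' j)⁻¹) * Matrix.diagonal w := by
      ext i j
      rw [Matrix.mul_diagonal, Matrix.diagonal_mul]
      show d i * (w j * (x' i + y' j)⁻¹) = d i * (x' i + y' j)⁻¹ * w j
      ring
    have hdet2 : (Matrix.of fun i j => d i * (w j * (x' i + y' j)⁻¹) :
        Matrix (Fin m) (Fin m) ℝ).det
        = (∏ i, d i) * (Matrix.of fun i j => (x' i + y' j)⁻¹ :
            Matrix (Fin m) (Fin m) ℝ).det * ∏ j, w j := by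
      rw [hfact, Matrix.det_mul, Matrix.det_mul, Matrix.det_diagonal, Matrix.det_diagonal]
    have hmain : 0 < (Matrix.fromBlocks A B C D).det := by
      rw [Matrix.det_fromBlocks₂₂, Matrix.invOf_eq_nonsing_inv, hschur, hdet2, hdetD]
      have hdet := ih x' y' hx'm hy'm hpos'
      have hd : 0 < ∏ i, d i := Finset.prod_pos fun i _ => hdpos i
      have hw : 0 < ∏ j, w j := Finset.prod_pos fun j _ => hwpos j
      exact mul_pos (inv_pos.mpr hposll) (mul_pos (mul_pos hd hdet) hw)
    rw [← Matrix.det_submatrix_equiv_self e, hsub]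
    exact hmain
private lemma cauchy_psd : ∀ (m : ℕ) (x : Fin m → ℝ), (∀ i, 0 < x i) →
    (Matrix.of fun i j => (x i + x j)⁻¹ : Matrix (Fin m) (Fin m) ℝ).PosSemidef := by
  intro m
  induction m with
  | zero =>
    intro x _
    refine ⟨?_, fun v => ?_⟩
    · ext i j; exact i.elim0
    · rw [Finsupp.sum, Finset.eq_empty_of_isEmpty v.support]; simp
  | succ m ih =>
    intro x hx
    set e : Fin m ⊕ Fin 1 ≃ Fin (m + 1) := finSumFinEquiv with he
    set x' : Fin m → ℝ := fun i => x (e (Sum.inl i)) with hx'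
    set xl : ℝ := x (e (Sum.inr 0)) with hxl
    have hx'pos : ∀ i, 0 < x' i := fun i => hx _
    have hxlpos : 0 < xl := hx _
    have hpos' : ∀ i j, 0 < x' i + x' j := fun i j => add_pos (hx'pos i) (hx'pos j)
    have hposyl : ∀ i, 0 < x' i + xl := fun i => add_pos (hx'pos i) hxlpos
    have hposll : 0 < xl + xl := add_pos hxlpos hxlpos
    set A : Matrix (Fin m) (Fin m) ℝ := Matrix.of fun i j => (x' i + x' j)⁻¹ with hA
    set B : Matrix (Fin m) (Fin 1) ℝ := Matrix.of fun i _ => (x' i + xl)⁻¹ with hB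
    set D : Matrix (Fin 1) (Fin 1) ℝ := Matrix.of fun _ _ => (xl + xl)⁻¹ with hD
    have hsub : (Matrix.of fun i j => (x i + x j)⁻¹ :
        Matrix (Fin (m+1)) (Fin (m+1)) ℝ).submatrix e e = Matrix.fromBlocks A B Bᴴ D := by
      ext i j
      rcases i with i | i <;> rcases j with j | j
      · rfl
      · rw [Fin.eq_zero j]; rfl
      · rw [Fin.eq_zero i]
        show (x (e (Sum.inr 0)) + x (e (Sum.inl j)))⁻¹ = Bᴴ 0 j
        rw [Matrix.conjTranspose_apply]
        simp [hB, add_comm]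
        rfl
      · rw [Fin.eq_zero i, Fin.eq_zero j]; rfl
    have hDdiag : D = Matrix.diagonal (fun _ : Fin 1 => (xl + xl)⁻¹) := by
      ext i j
      rw [Fin.eq_zero i, Fin.eq_zero j]
      simp [hD]
    have hDpd : D.PosDef := by
      rw [hDdiag]
      exact Matrix.posDef_diagonal_iff.mpr fun _ => inv_pos.mpr hposll
    have hdetD : D.det = (xl + xl)⁻¹ := by rw [Matrix.det_fin_one]; rfl
    haveI : Invertible D :=
      D.invertibleOfIsUnitDet (by rw [hdetD]; exact (inv_pos.mpr hposll).ne'.isUnit)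
    have hDinv : D⁻¹ = Matrix.of fun _ _ : Fin 1 => (xl + xl) := by
      apply Matrix.inv_eq_right_inv
      ext i j
      rw [Fin.eq_zero i, Fin.eq_zero j]
      simp only [Matrix.mul_apply, Fin.sum_univ_one, Matrix.of_apply, Matrix.one_apply_eq, hD]
      exact inv_mul_cancel₀ hposll.ne'
    set d : Fin m → ℝ := fun i => (xl - x' i) / (x' i + xl) with hdd
    have hschur : A - B * D⁻¹ * Bᴴ
        = Matrix.diagonal d * (Matrix.of fun i j => (x' i + x' j)⁻¹) * (Matrix.diagonal d)ᴴ := by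
      have hstar : (Matrix.diagonal d)ᴴ = Matrix.diagonal d := by
        rw [Matrix.diagonal_conjTranspose]
        congr 1
      rw [hstar]
      ext i j
      rw [Matrix.mul_diagonal, Matrix.diagonal_mul]
      simp only [hDinv, Matrix.sub_apply, Matrix.mul_apply, Fin.sum_univ_one, Matrix.of_apply,
        Matrix.conjTranspose_apply, hA, hB, hdd, star_trivial]
      have h1 : x' i + x' j ≠ 0 := (hpos' i j).ne'
      have h2 : x' i + xl ≠ 0 := (hposyl i).ne'
      have h3 : x' j + xl ≠ 0 := (hposyl j).ne'
      field_simp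
      ring
    have hmain : (Matrix.fromBlocks A B Bᴴ D).PosSemidef := by
      rw [Matrix.PosDef.fromBlocks₂₂ A B hDpd, hschur]
      exact (ih x' hx'pos).mul_mul_conjTranspose_same (Matrix.diagonal d)
    rw [← Matrix.posSemidef_submatrix_equiv e, hsub]
    exact hmain

private lemma cauchyPsi_eq (n : ℕ) (lam : Fin n → ℝ) :
    cauchyPsi n lam = Matrix.of fun i j => (lam i + lam j)⁻¹ := by
  ext i j
  simp [cauchyPsi, one_div]

private lemma cauchyPsi_posDef (n : ℕ) (lam : Fin n → ℝ) (hpos : ∀ i, 0 < lam i)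
    (hmono : StrictMono lam) : (cauchyPsi n lam).PosDef := by
  have hpsd : (cauchyPsi n lam).PosSemidef := by
    rw [cauchyPsi_eq]; exact cauchy_psd n lam hpos
  have hdet : 0 < (cauchyPsi n lam).det := by
    rw [cauchyPsi_eq]
    exact cauchy_det_pos n lam lam hmono hmono fun i j => add_pos (hpos i) (hpos j)
  refine Matrix.PosDef.of_dotProduct_mulVec_pos hpsd.1 fun v hv =>
    lt_of_le_of_ne (hpsd.dotProduct_mulVec_nonneg v) fun h0 => hv ?_
  have hM0 : (cauchyPsi n lam) *ᵥ v = 0 := (hpsd.dotProduct_mulVec_zero_iff v).mp h0.symm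
  have hinj : Function.Injective ((cauchyPsi n lam).mulVec) :=
    Matrix.mulVec_injective_iff_isUnit.mpr ((Matrix.isUnit_iff_isUnit_det _).mpr hdet.ne'.isUnit)
  have : (cauchyPsi n lam) *ᵥ v = (cauchyPsi n lam) *ᵥ 0 := by rw [hM0, Matrix.mulVec_zero]
  exact hinj this
private lemma cauchyPsi_inv_sign (m : ℕ) (lam : Fin (m+1) → ℝ) (hpos : ∀ i, 0 < lam i)
    (hmono : StrictMono lam) (i j : Fin (m+1)) :
    0 < (-1 : ℝ) ^ (i + j : ℕ) * (cauchyPsi (m+1) lam)⁻¹ i j := by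
  have hdet : 0 < (cauchyPsi (m+1) lam).det := (cauchyPsi_posDef _ lam hpos hmono).det_pos
  have hminor : 0 < ((cauchyPsi (m+1) lam).submatrix j.succAbove i.succAbove).det := by
    have hrepr : (cauchyPsi (m+1) lam).submatrix j.succAbove i.succAbove
        = Matrix.of fun a b => (lam (j.succAbove a) + lam (i.succAbove b))⁻¹ := by
      ext a b
      simp [cauchyPsi, one_div, Matrix.submatrix_apply]
    rw [hrepr]
    exact cauchy_det_pos m _ _ (hmono.comp (Fin.strictMono_succAbove j))
      (hmono.comp (Fin.strictMono_succAbove i)) fun a b => add_pos (hpos _) (hpos _)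
  have hinv : (cauchyPsi (m+1) lam)⁻¹ i j = (cauchyPsi (m+1) lam).det⁻¹ *
      ((-1 : ℝ) ^ (j + i : ℕ) *
        ((cauchyPsi (m+1) lam).submatrix j.succAbove i.succAbove).det) := by
    rw [Matrix.inv_def, Matrix.smul_apply, Matrix.adjugate_fin_succ_eq_det_submatrix,
      smul_eq_mul, Ring.inverse_eq_inv]
  rw [hinv, add_comm (j : ℕ) (i : ℕ)]
  have hrw : (-1 : ℝ) ^ (i + j : ℕ) * ((cauchyPsi (m+1) lam).det⁻¹ *
      ((-1 : ℝ) ^ (i + j : ℕ) *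
        ((cauchyPsi (m+1) lam).submatrix j.succAbove i.succAbove).det))
      = ((-1 : ℝ) ^ (i + j : ℕ) * (-1 : ℝ) ^ (i + j : ℕ)) * ((cauchyPsi (m+1) lam).det⁻¹ *
        ((cauchyPsi (m+1) lam).submatrix j.succAbove i.succAbove).det) := by ring
  rw [hrw, neg_one_pow_mul_self, one_mul]
  exact mul_pos (inv_pos.mpr hdet) hminor
set_option maxHeartbeats 2000000 in
/-- If `b` is a unit vector with nonzero entries, `λ` the smallest eigenvalue of
`W(b)`, `x` a unit eigenvector of `W(b)` for `λ` with additionally `W(x) b = λ b`,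
then `λ = (1ᵀ σ* Ψ⁻¹ σ* 1)⁻¹`, `bᵢ² = λ (σ* Ψ⁻¹ σ* 1)ᵢ` for all `i`, and
`x = ±σ* b`. -/
theorem critical_point_characterization (n : ℕ) (hn : 0 < n) (lam : Fin n → ℝ)
    (hpos : ∀ i, 0 < lam i) (hmono : StrictMono lam)
    (b : Fin n → ℝ) (hb_unit : ∑ i, b i ^ 2 = 1) (hb : ∀ i, b i ≠ 0)
    (x : Fin n → ℝ) (hx_unit : ∑ i, x i ^ 2 = 1)
    (hx_eig : (cauchyW n lam b).mulVec x =
      sInf (spectrum ℝ (cauchyW n lam b)) • x)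
    (hxb : (cauchyW n lam x).mulVec b =
      sInf (spectrum ℝ (cauchyW n lam b)) • b) :
    sInf (spectrum ℝ (cauchyW n lam b)) =
        ((fun _ : Fin n => (1 : ℝ)) ⬝ᵥ
          (sigmaStar n * (cauchyPsi n lam)⁻¹ * sigmaStar n).mulVec
            fun _ : Fin n => (1 : ℝ))⁻¹ ∧
      (∀ i, b i ^ 2 =
        sInf (spectrum ℝ (cauchyW n lam b)) *
          ((sigmaStar n * (cauchyPsi n lam)⁻¹ * sigmaStar n).mulVec
            (fun _ : Fin n => (1 : ℝ)) i)) ∧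
      (x = (sigmaStar n).mulVec b ∨ x = -(sigmaStar n).mulVec b) := by
  obtain ⟨m, rfl⟩ : ∃ m, n = m + 1 := ⟨n - 1, (Nat.succ_pred_eq_of_pos hn).symm⟩
  set Ψ : Matrix (Fin (m+1)) (Fin (m+1)) ℝ := cauchyPsi (m+1) lam with hΨ
  set L : ℝ := sInf (spectrum ℝ (cauchyW (m+1) lam b)) with hL
  have hΨpd : Ψ.PosDef := cauchyPsi_posDef _ lam hpos hmono
  have hΨdet : IsUnit Ψ.det := hΨpd.det_pos.ne'.isUnit
  have hΨinj : Function.Injective (Ψ.mulVec) :=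
    Matrix.mulVec_injective_iff_isUnit.mpr ((Matrix.isUnit_iff_isUnit_det _).mpr hΨdet)
  -- mulVec formula for cauchyW
  have hdiagmul : ∀ g v : Fin (m+1) → ℝ, (Matrix.diagonal g) *ᵥ v = fun j => g j * v j := by
    intro g v; funext j; rw [Matrix.mulVec_diagonal]
  have hWmul : ∀ g v : Fin (m+1) → ℝ, (cauchyW (m+1) lam g) *ᵥ v
      = fun i => g i * (Ψ *ᵥ fun j => g j * v j) i := by
    intro g v
    rw [cauchyW, ← hΨ, ← Matrix.mulVec_mulVec, ← Matrix.mulVec_mulVec, hdiagmul g v,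
      hdiagmul g (Ψ *ᵥ fun j => g j * v j)]
  set c : Fin (m+1) → ℝ := fun i => b i * x i with hc
  set u : Fin (m+1) → ℝ := Ψ *ᵥ c with hu
  have h1 : ∀ i, b i * u i = L * x i := by
    intro i
    have h := hx_eig
    rw [hWmul b x] at h
    have := congrFun h i
    simpa [hu, hc] using this
  have h2 : ∀ i, x i * u i = L * b i := by
    intro i
    have h := hxb
    rw [hWmul x b] at h
    have hxb' : (fun j => x j * b j) = c := by funext j; rw [hc]; ring
    rw [hxb'] at h
    have := congrFun h i
    simpa [hu] using this
  -- L ≠ 0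
  have hL0 : L ≠ 0 := by
    intro h0
    have hu0 : ∀ i, u i = 0 := by
      intro i
      have := h1 i
      rw [h0, zero_mul] at this
      exact (mul_eq_zero.mp this).resolve_left (hb i)
    have hc0 : c = 0 := by
      apply hΨinj
      rw [Matrix.mulVec_zero, ← hu]
      exact funext hu0
    have hx0 : ∀ i, x i = 0 := by
      intro i
      have := congrFun hc0 i
      exact (mul_eq_zero.mp this).resolve_left (hb i)
    simp [hx0] at hx_unit
  -- the sign vector ε
  set ε : Fin (m+1) → ℝ := fun i => u i / L with hε
  have hxε : ∀ i, x i = ε i * b i := by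
    intro i
    rw [hε]
    field_simp
    linarith [h1 i]
  have hu_eq : ∀ i, u i = L * ε i := by
    intro i; rw [hε]; field_simp
  have hε2 : ∀ i, ε i * ε i = 1 := by
    intro i
    have hh2 := h2 i
    rw [hxε i, hu_eq i] at hh2
    have e2 : b i * (ε i * ε i) = b i := mul_left_cancel₀ hL0 (by linear_combination hh2)
    exact mul_left_cancel₀ (hb i) (by linear_combination e2)
  have hΨc : Ψ *ᵥ c = L • ε := by
    rw [← hu]
    funext i
    simp [hu_eq i, smul_eq_mul]
  set z : Fin (m+1) → ℝ := Ψ⁻¹ *ᵥ ε with hz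
  have hcval : c = L • z := by
    have hid : Ψ⁻¹ *ᵥ (Ψ *ᵥ c) = c := by
      rw [Matrix.mulVec_mulVec, Matrix.nonsing_inv_mul _ hΨdet, Matrix.one_mulVec]
    rw [← hid, hΨc, Matrix.mulVec_smul]
  have hb2 : ∀ i, b i ^ 2 = L * (ε i * z i) := by
    intro i
    have hci : c i = L * z i := by rw [hcval]; simp [smul_eq_mul]
    have hcb : c i = ε i * b i ^ 2 := by
      show b i * x i = ε i * b i ^ 2
      rw [hxε i]; ring
    have e1 : ε i * b i ^ 2 = L * z i := by rw [← hcb]; exact hci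
    linear_combination ε i * e1 - b i ^ 2 * hε2 i
  have hsum1 : (1 : ℝ) = L * (ε ⬝ᵥ z) := by
    rw [← hb_unit, dotProduct, Finset.mul_sum]
    exact Finset.sum_congr rfl fun i _ => hb2 i
  have hΨinvpd : (Ψ⁻¹).PosDef := hΨpd.inv
  have hεne : ε ≠ 0 := by
    intro h0
    have h := hε2 ⟨0, Nat.succ_pos m⟩
    rw [congrFun h0 ⟨0, Nat.succ_pos m⟩] at h
    simp at h
  have heQpos : 0 < ε ⬝ᵥ z := by
    have h := hΨinvpd.dotProduct_mulVec_pos hεne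
    simpa [hz] using h
  have hLpos : 0 < L := by
    rcases lt_trichotomy L 0 with h | h | h
    · nlinarith [heQpos, hsum1]
    · exact absurd h hL0
    · exact h
  have hLeq : L = (ε ⬝ᵥ z)⁻¹ := by
    field_simp
    linarith [hsum1]
  -- the alternating sign vector
  set sv : Fin (m+1) → ℝ := fun i => (-1 : ℝ) ^ (i : ℕ) with hsv
  set w : Fin (m+1) → ℝ := Ψ⁻¹ *ᵥ sv with hw
  have hsv2 : ∀ i, sv i * sv i = 1 := fun i => neg_one_pow_mul_self _
  have hsvne : sv ≠ 0 := by
    intro h0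
    have h := hsv2 ⟨0, Nat.succ_pos m⟩
    rw [congrFun h0 ⟨0, Nat.succ_pos m⟩] at h
    simp at h
  have hSpos : 0 < sv ⬝ᵥ w := by
    have h := hΨinvpd.dotProduct_mulVec_pos hsvne
    simpa [hw] using h
  -- Hermitian-ness and the Rayleigh bound
  have hdiagherm : (Matrix.diagonal b)ᴴ = Matrix.diagonal b := by
    rw [Matrix.diagonal_conjTranspose]
    congr 1
  have hWherm : (cauchyW (m+1) lam b).IsHermitian := by
    show (cauchyW (m+1) lam b)ᴴ = cauchyW (m+1) lam b
    rw [cauchyW, ← hΨ, Matrix.conjTranspose_mul, Matrix.conjTranspose_mul, hdiagherm,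
      hΨpd.1.eq, ← Matrix.mul_assoc]
  have hray : ∀ v : Fin (m+1) → ℝ, L * (v ⬝ᵥ v) ≤ v ⬝ᵥ ((cauchyW (m+1) lam b) *ᵥ v) := by
    intro v
    have hone : ((L • 1 : Matrix (Fin (m+1)) (Fin (m+1)) ℝ)).IsHermitian := by
      show _ᴴ = _
      rw [Matrix.conjTranspose_smul, Matrix.conjTranspose_one, star_trivial]
    have hAherm : ((cauchyW (m+1) lam b) - L • 1).IsHermitian := hWherm.sub hone
    have hspec : spectrum ℝ ((cauchyW (m+1) lam b) - L • 1)
        = spectrum ℝ (cauchyW (m+1) lam b) - ({L} : Set ℝ) := by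
      rw [spectrum.sub_singleton_eq]
      congr 1
      rw [Algebra.algebraMap_eq_smul_one]
    have hpsd : ((cauchyW (m+1) lam b) - L • 1).PosSemidef := by
      apply hAherm.posSemidef_iff_eigenvalues_nonneg.mpr
      intro i
      have hmem := hAherm.eigenvalues_mem_spectrum_real i
      rw [hspec] at hmem
      obtain ⟨s, hs, t, ht, hst⟩ := Set.mem_sub.mp hmem
      rw [Set.mem_singleton_iff] at ht
      have hls : L ≤ s := csInf_le (Set.Finite.bddBelow (Matrix.finite_spectrum _)) hs
      rw [← hst, ht]
      exact sub_nonneg.mpr hls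
    have h := hpsd.dotProduct_mulVec_nonneg v
    rw [Matrix.sub_mulVec, Matrix.smul_mulVec, Matrix.one_mulVec, dotProduct_sub,
      dotProduct_smul, smul_eq_mul, star_trivial] at h
    linarith
  -- apply the Rayleigh bound to q = w / b
  set q : Fin (m+1) → ℝ := fun i => w i / b i with hq
  have hbq : (fun j => b j * q j) = w := by
    funext j
    show b j * (w j / b j) = w j
    rw [mul_comm]
    exact div_mul_cancel₀ _ (hb j)
  have hΨw : Ψ *ᵥ w = sv := by
    rw [hw, Matrix.mulVec_mulVec, Matrix.mul_nonsing_inv _ hΨdet, Matrix.one_mulVec]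
  have hWq : (cauchyW (m+1) lam b) *ᵥ q = fun i => b i * sv i := by
    rw [hWmul b q, hbq, hΨw]
  have hvWv : q ⬝ᵥ ((cauchyW (m+1) lam b) *ᵥ q) = sv ⬝ᵥ w := by
    rw [hWq, dotProduct, dotProduct]
    refine Finset.sum_congr rfl fun i _ => ?_
    show w i / b i * (b i * sv i) = sv i * w i
    rw [div_mul_eq_mul_div, div_eq_iff (hb i)]
    ring
  have hCS : (sv ⬝ᵥ w) ^ 2 ≤ q ⬝ᵥ q := by
    have hcs := Finset.sum_mul_sq_le_sq_mul_sq Finset.univ (fun i => sv i * b i)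
      (fun i => w i / b i)
    have e1 : ∑ i, (sv i * b i) * (w i / b i) = sv ⬝ᵥ w := by
      rw [dotProduct]
      refine Finset.sum_congr rfl fun i _ => ?_
      rw [mul_comm (sv i * b i) (w i / b i), div_mul_eq_mul_div, div_eq_iff (hb i)]
      ring
    have e2 : ∑ i, (sv i * b i) ^ 2 = 1 := by
      rw [← hb_unit]
      refine Finset.sum_congr rfl fun i _ => ?_
      have := hsv2 i
      nlinarith [hsv2 i]
    have e3 : ∑ i, (w i / b i) ^ 2 = q ⬝ᵥ q := by
      rw [dotProduct]
      refine Finset.sum_congr rfl fun i _ => ?_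
      rw [hq]; ring
    rw [e1, e2, e3, one_mul] at hcs
    exact hcs
  have hSle : sv ⬝ᵥ w ≤ ε ⬝ᵥ z := by
    have hr := hray q
    rw [hvWv] at hr
    -- L * S^2 ≤ L * (q ⬝ᵥ q) ≤ S  so  L * S ≤ 1 = L * eQ
    have h5 : L * (sv ⬝ᵥ w) ^ 2 ≤ sv ⬝ᵥ w :=
      le_trans (mul_le_mul_of_nonneg_left hCS hLpos.le) hr
    have h6 : L * (sv ⬝ᵥ w) ≤ 1 := by
      have := mul_le_mul_of_nonneg_right h5 (le_of_lt (inv_pos.mpr hSpos))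
      calc L * (sv ⬝ᵥ w) = L * (sv ⬝ᵥ w) ^ 2 * (sv ⬝ᵥ w)⁻¹ := by
            field_simp
        _ ≤ (sv ⬝ᵥ w) * (sv ⬝ᵥ w)⁻¹ := this
        _ = 1 := mul_inv_cancel₀ hSpos.ne'
    rw [hsum1] at h6
    exact le_of_mul_le_mul_left h6 hLpos
  -- checkerboard positivity
  have hM : ∀ i j, 0 < sv i * (Ψ⁻¹ i j * sv j) := by
    intro i j
    have h := cauchyPsi_inv_sign m lam hpos hmono i j
    have heq2 : sv i * (Ψ⁻¹ i j * sv j) = (-1 : ℝ) ^ ((i : ℕ) + (j : ℕ)) * Ψ⁻¹ i j := by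
      rw [hsv, pow_add]
      ring
    rw [heq2]
    exact h
  have hdouble : ∀ v v' : Fin (m+1) → ℝ,
      v ⬝ᵥ (Ψ⁻¹ *ᵥ v') = ∑ i, ∑ j, v i * (Ψ⁻¹ i j * v' j) := by
    intro v v'
    simp [dotProduct, Matrix.mulVec, Finset.mul_sum]
  set δ : Fin (m+1) → ℝ := fun i => sv i * ε i with hδ
  have hδ2 : ∀ i, δ i * δ i = 1 := by
    intro i
    show (sv i * ε i) * (sv i * ε i) = 1
    linear_combination ε i * ε i * hsv2 i + hε2 i
  have hident : ∀ i j, ε i * (Ψ⁻¹ i j * ε j) = (δ i * δ j) * (sv i * (Ψ⁻¹ i j * sv j)) := by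
    intro i j
    show ε i * (Ψ⁻¹ i j * ε j) = ((sv i * ε i) * (sv j * ε j)) * (sv i * (Ψ⁻¹ i j * sv j))
    linear_combination (-(sv j * sv j * ε i * ε j * Ψ⁻¹ i j)) * hsv2 i
      + (-(ε i * ε j * Ψ⁻¹ i j)) * hsv2 j
  have hδδle : ∀ i j, δ i * δ j ≤ 1 := by
    intro i j
    have hsq : (δ i * δ j) * (δ i * δ j) = 1 := by
      linear_combination δ j * δ j * hδ2 i + hδ2 j
    rcases mul_self_eq_one_iff.mp hsq with h | h
    · rw [h]
    · rw [h]; norm_num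
  have heQS : ε ⬝ᵥ z ≤ sv ⬝ᵥ w := by
    rw [hz, hw, hdouble, hdouble]
    refine Finset.sum_le_sum fun i _ => Finset.sum_le_sum fun j _ => ?_
    rw [hident i j]
    exact (mul_le_mul_of_nonneg_right (hδδle i j) (hM i j).le).trans_eq (one_mul _)
  have heq : ε ⬝ᵥ z = sv ⬝ᵥ w := le_antisymm heQS hSle
  -- equality forces all δ i δ j = 1
  have hδδ1 : ∀ i j, δ i * δ j = 1 := by
    have hzero : ∑ i, ∑ j, (sv i * (Ψ⁻¹ i j * sv j) - ε i * (Ψ⁻¹ i j * ε j)) = 0 := by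
      have : ∀ i : Fin (m+1), ∑ j, (sv i * (Ψ⁻¹ i j * sv j) - ε i * (Ψ⁻¹ i j * ε j))
          = ∑ j, sv i * (Ψ⁻¹ i j * sv j) - ∑ j, ε i * (Ψ⁻¹ i j * ε j) :=
        fun i => Finset.sum_sub_distrib _ _
      rw [Finset.sum_congr rfl fun i _ => this i, Finset.sum_sub_distrib,
        ← hdouble, ← hdouble, ← hz, ← hw, heq, sub_self]
    have hnn : ∀ i ∈ Finset.univ, (0:ℝ) ≤ ∑ j, (sv i * (Ψ⁻¹ i j * sv j) - ε i * (Ψ⁻¹ i j * ε j)) := by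
      intro i _
      refine Finset.sum_nonneg fun j _ => ?_
      rw [hident i j]
      nlinarith [hM i j, hδδle i j]
    have houter := (Finset.sum_eq_zero_iff_of_nonneg hnn).mp hzero
    intro i j
    have hinner := (Finset.sum_eq_zero_iff_of_nonneg (fun j _ => by
      rw [hident i j]
      nlinarith [hM i j, hδδle i j])).mp (houter i (Finset.mem_univ i)) j (Finset.mem_univ j)
    rw [hident i j] at hinner
    have hMij := hM i j
    by_contra hne
    have : (1 - δ i * δ j) * (sv i * (Ψ⁻¹ i j * sv j)) > 0 := by
      have : 0 < 1 - δ i * δ j := lt_of_le_of_ne (by linarith [hδδle i j]) (by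
        intro h; exact hne (by linarith))
      exact mul_pos this hMij
    nlinarith [hinner]
  -- δ is the constant sign δ0
  have hδ0sq := hδ2 ⟨0, Nat.succ_pos m⟩
  set δ0 : ℝ := δ ⟨0, Nat.succ_pos m⟩ with hδ0def
  have hδ0 : δ0 = 1 ∨ δ0 = -1 := mul_self_eq_one_iff.mp hδ0sq
  have hεs : ∀ i, ε i = δ0 * sv i := by
    intro i
    have h6 := hδδ1 i ⟨0, Nat.succ_pos m⟩
    have e7 : δ i = δ0 := by linear_combination δ0 * h6 - δ i * hδ0sq
    have e8 : sv i * δ i = ε i := by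
      show sv i * (sv i * ε i) = ε i
      linear_combination ε i * hsv2 i
    rw [← e8, e7]
    ring
  have hεsmul : ε = δ0 • sv := by
    funext i
    rw [hεs i]
    rfl
  have hzw : z = δ0 • w := by
    rw [hz, hw, hεsmul, Matrix.mulVec_smul]
  -- computing the RHS expressions
  have hsig : sigmaStar (m+1) = Matrix.diagonal sv := rfl
  have hsvone : (sigmaStar (m+1)) *ᵥ (fun _ : Fin (m+1) => (1:ℝ)) = sv := by
    rw [hsig, hdiagmul]
    funext j
    rw [mul_one]
  have hRHSi : ∀ i, (sigmaStar (m+1) * (cauchyPsi (m+1) lam)⁻¹ * sigmaStar (m+1)).mulVec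
      (fun _ : Fin (m+1) => (1:ℝ)) i = sv i * w i := by
    intro i
    rw [← Matrix.mulVec_mulVec, ← Matrix.mulVec_mulVec, hsvone, ← hΨ, ← hw, hsig, hdiagmul]
  have hRHSdot : ((fun _ : Fin (m+1) => (1 : ℝ)) ⬝ᵥ
      (sigmaStar (m+1) * (cauchyPsi (m+1) lam)⁻¹ * sigmaStar (m+1)).mulVec
        fun _ : Fin (m+1) => (1 : ℝ)) = sv ⬝ᵥ w := by
    rw [dotProduct, dotProduct]
    refine Finset.sum_congr rfl fun i _ => ?_
    rw [hRHSi i, one_mul]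
  refine ⟨?_, ?_, ?_⟩
  · rw [hRHSdot, hLeq, heq]
  · intro i
    rw [hRHSi i]
    have := hb2 i
    rw [hεs i, congrFun hzw i] at this
    rw [this]
    show L * (δ0 * sv i * (δ0 * w i)) = L * (sv i * w i)
    have hδδ : δ0 * δ0 = 1 := mul_self_eq_one_iff.mpr hδ0
    linear_combination (L * sv i * w i) * hδδ
  · rcases hδ0 with h | h
    · left
      funext i
      rw [hxε i, hεs i, h, hsig, Matrix.mulVec_diagonal]
      ring
    · right
      funext i
      rw [hxε i, hεs i, h]
      show -1 * sv i * b i = (-(sigmaStar (m+1) *ᵥ b)) i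
      rw [Pi.neg_apply, hsig, Matrix.mulVec_diagonal]
      ring
end

section
/- Let v* ∈ ℝ^n be the vector with positive entries defined by v*_i = sqrt((σ* Ψ^{-1} σ* 1)_i / (1ᵀ σ* Ψ^{-1} σ* 1)). Then for every n×n diagonal signature matrix σ: the vector σ v* is a unit vector, the smallest eigenvalue of W(σ v*) equals (1ᵀ σ* Ψ^{-1} σ* 1)^{-1}, and σ σ* v* is a unit eigenvector of W(σ v*) corresponding to this smallest eigenvalue. -/
open Matrix BigOperators

/-- The optimal actuator profile `v*`, `v*ᵢ = sqrt((σ* Ψ⁻¹ σ* 1)ᵢ / (1ᵀ σ* Ψ⁻¹ σ* 1))`. -/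
noncomputable def vStar (n : ℕ) (lam : Fin n → ℝ) : Fin n → ℝ := fun i =>
  Real.sqrt
    ((sigmaStar n * (cauchyPsi n lam)⁻¹ * sigmaStar n).mulVec
        (fun _ : Fin n => (1 : ℝ)) i /
      ((fun _ : Fin n => (1 : ℝ)) ⬝ᵥ
        (sigmaStar n * (cauchyPsi n lam)⁻¹ * sigmaStar n).mulVec
          fun _ : Fin n => (1 : ℝ)))


open Polynomial Finset Matrix


noncomputable def gAux (n : ℕ) (lam : Fin n → ℝ) (j : Fin n) : ℝ :=
  (∏ k, (lam j + lam k)) * (∏ k ∈ Finset.univ.erase j, (lam j - lam k))⁻¹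

noncomputable def BAux (n : ℕ) (lam : Fin n → ℝ) : Matrix (Fin n) (Fin n) ℝ :=
  Matrix.of fun i j => gAux n lam i * gAux n lam j / (lam i + lam j)

section
variable {n : ℕ} {lam : Fin n → ℝ}

lemma sum_pos' (hpos : ∀ i, 0 < lam i) (i j : Fin n) : 0 < lam i + lam j :=
  add_pos (hpos i) (hpos j)

lemma prodP_pos (hpos : ∀ i, 0 < lam i) (j : Fin n) : 0 < ∏ k, (lam j + lam k) :=
  Finset.prod_pos fun k _ => add_pos (hpos j) (hpos k)

lemma prodR_ne (hinj : Function.Injective lam) (j : Fin n) :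
    (∏ k ∈ Finset.univ.erase j, (lam j - lam k)) ≠ 0 :=
  Finset.prod_ne_zero_iff.mpr fun k hk => sub_ne_zero_of_ne fun h =>
    (Finset.mem_erase.mp hk).1 (hinj h.symm)

lemma gAux_ne (hpos : ∀ i, 0 < lam i) (hinj : Function.Injective lam) (j : Fin n) :
    gAux n lam j ≠ 0 :=
  mul_ne_zero (ne_of_gt (prodP_pos hpos j)) (inv_ne_zero (prodR_ne hinj j))

-- splitting the full product
lemma prodP_split (i m j : Fin n) (him : i ≠ m) :
    (∏ k, (lam j + lam k)) =
      (lam j + lam i) * ((lam j + lam m) *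
        ∏ k ∈ (Finset.univ.erase i).erase m, (lam j + lam k)) := by
  rw [← Finset.mul_prod_erase _ _ (Finset.mem_univ i),
    ← Finset.mul_prod_erase _ _ (Finset.mem_erase.mpr ⟨Ne.symm him, Finset.mem_univ m⟩)]

lemma prodP_split1 (i j : Fin n) :
    (∏ k, (lam j + lam k)) = (lam j + lam i) * ∏ k ∈ Finset.univ.erase i, (lam j + lam k) :=
  (Finset.mul_prod_erase _ _ (Finset.mem_univ i)).symm

end

section
variable {n : ℕ} {lam : Fin n → ℝ}

lemma leadingCoeff_lagrange_basis {s : Finset ℝ} {x : ℝ} (hx : x ∈ s)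
    (hinj : Set.InjOn id (s : Set ℝ)) :
    (Lagrange.basis s id x).coeff (s.card - 1) = ∏ y ∈ s.erase x, (x - y)⁻¹ := by
  have hdeg : (Lagrange.basis s id x).natDegree = s.card - 1 :=
    Lagrange.natDegree_basis hinj hx
  rw [← hdeg, Polynomial.coeff_natDegree]
  unfold Lagrange.basis
  rw [Polynomial.leadingCoeff_prod]
  refine Finset.prod_congr rfl fun y _ => ?_
  rw [Lagrange.basisDivisor, leadingCoeff_mul, leadingCoeff_C,
    (monic_X_sub_C (id y)).leadingCoeff, mul_one]; rfl

lemma coeff_eq_sum_values (s : Finset ℝ) (Q : ℝ[X]) (hQ : Q.degree < s.card) :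
    Q.coeff (s.card - 1) = ∑ x ∈ s, Q.eval x * ∏ y ∈ s.erase x, (x - y)⁻¹ := by
  have hinj : Set.InjOn id (s : Set ℝ) := fun a _ b _ h => h
  have h := Lagrange.eq_interpolate hinj hQ
  conv_lhs => rw [h]
  rw [Lagrange.interpolate_apply, Polynomial.finset_sum_coeff]
  refine Finset.sum_congr rfl fun x hx => ?_
  rw [Polynomial.coeff_C_mul, leadingCoeff_lagrange_basis hx hinj]
  simp

lemma psi_mul_B (hpos : ∀ i, 0 < lam i) (hinj : Function.Injective lam) :
    cauchyPsi n lam * BAux n lam = 1 := by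
  ext i m
  rw [Matrix.mul_apply]
  have hR : ∀ j : Fin n, (∏ k ∈ Finset.univ.erase j, (lam j - lam k)) ≠ 0 := prodR_ne hinj
  have hP : ∀ j : Fin n, (0:ℝ) < ∏ k, (lam j + lam k) := prodP_pos hpos
  have hsum : ∀ j k : Fin n, lam j + lam k ≠ 0 := fun j k => (sum_pos' hpos j k).ne'
  by_cases him : i = m
  · subst him
    rw [Matrix.one_apply_eq]
    have hn1 : 1 ≤ n := i.pos
    set Q : ℝ[X] := ∏ k ∈ Finset.univ.erase i, (X + C (lam k)) with hQdef
    have hQdeg : Q.natDegree = n - 1 := by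
      rw [hQdef, Polynomial.natDegree_prod _ _ (fun k _ => Polynomial.X_add_C_ne_zero (lam k))]
      simp only [Polynomial.natDegree_X_add_C]
      rw [Finset.sum_const, smul_eq_mul, mul_one,
        Finset.card_erase_of_mem (Finset.mem_univ i), Finset.card_univ, Fintype.card_fin]
    have hnm : -lam i ∉ Finset.image lam Finset.univ := by
      rw [Finset.mem_image]
      rintro ⟨k, -, hk⟩
      have := hpos k; have := hpos i; linarith
    set s : Finset ℝ := insert (-lam i) (Finset.image lam Finset.univ) with hsdef
    have hcard : s.card = n + 1 := by
      rw [hsdef, Finset.card_insert_of_notMem hnm,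
        Finset.card_image_of_injective _ hinj, Finset.card_univ, Fintype.card_fin]
    have h0 := coeff_eq_sum_values s Q (by
      rw [hcard]
      exact lt_of_le_of_lt Q.degree_le_natDegree
        (by rw [hQdeg]; exact_mod_cast (by omega : n - 1 < n + 1)))
    rw [hcard] at h0
    have hcoeff : Q.coeff (n + 1 - 1) = 0 :=
      Polynomial.coeff_eq_zero_of_natDegree_lt (by omega)
    rw [hcoeff, hsdef, Finset.sum_insert hnm,
      Finset.sum_image (fun a _ b _ h => hinj h)] at h0
    rw [Finset.erase_insert hnm] at h0
    have hPR : ∀ j, ((∏ k ∈ Finset.univ.erase j, (lam j - lam k))⁻¹ : ℝ) ≠ 0 :=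
      fun j => inv_ne_zero (hR j)
    have h0' : (0:ℝ) =
        Q.eval (-lam i) * (∏ k, (-lam i - lam k))⁻¹ +
        ∑ j, Q.eval (lam j) *
          ((lam j + lam i)⁻¹ * (∏ k ∈ Finset.univ.erase j, (lam j - lam k))⁻¹) := by
      rw [h0]
      congr 1
      · rw [Finset.prod_image (fun a _ b _ h => hinj h), ← Finset.prod_inv_distrib]
      · refine Finset.sum_congr rfl fun j _ => ?_
        congr 1
        rw [Finset.erase_insert_of_ne (by
            have := hpos i; have := hpos j; intro h; rw [← h] at this; linarith :
            -lam i ≠ lam j),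
          Finset.prod_insert (fun h => hnm (Finset.mem_of_mem_erase h)),
          ← Finset.image_erase hinj, Finset.prod_image (fun a _ b _ h => hinj h),
          sub_neg_eq_add, ← Finset.prod_inv_distrib]
    have hS : ∑ j, Q.eval (lam j) *
          ((lam j + lam i)⁻¹ * (∏ k ∈ Finset.univ.erase j, (lam j - lam k))⁻¹) =
        -(Q.eval (-lam i) * (∏ k, (-lam i - lam k))⁻¹) := by linarith
    have key : ∀ j : Fin n,
        cauchyPsi n lam i j * BAux n lam j i =
          gAux n lam i * (Q.eval (lam j) *
            ((lam j + lam i)⁻¹ * (∏ k ∈ Finset.univ.erase j, (lam j - lam k))⁻¹)) := by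
      intro j
      have hev : Q.eval (lam j) = ∏ k ∈ Finset.univ.erase i, (lam j + lam k) := by
        rw [hQdef, Polynomial.eval_prod]; simp
      have cancel : ∀ x E R g : ℝ, x ≠ 0 →
          x⁻¹ * (x * E * R * g / x) = g * (E * (x⁻¹ * R)) := by
        intros x E R g hx; field_simp
      rw [cauchyPsi, BAux, Matrix.of_apply, Matrix.of_apply, gAux,
        prodP_split1 i j, hev, one_div, add_comm (lam i) (lam j)]
      exact cancel _ _ _ _ (hsum j i)
    have hev0 : Q.eval (-lam i) = (-1:ℝ)^(n-1) * ∏ k ∈ Finset.univ.erase i, (lam i - lam k) := by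
      rw [hQdef, Polynomial.eval_prod]
      simp only [Polynomial.eval_add, Polynomial.eval_X, Polynomial.eval_C]
      rw [show ((-1:ℝ)^(n-1)) = ∏ _k ∈ Finset.univ.erase i, (-1:ℝ) by
          rw [Finset.prod_const, Finset.card_erase_of_mem (Finset.mem_univ i),
            Finset.card_univ, Fintype.card_fin],
        ← Finset.prod_mul_distrib]
      exact Finset.prod_congr rfl fun k _ => by ring
    have hprod0 : (∏ k, (-lam i - lam k)) = (-1:ℝ)^n * ∏ k, (lam i + lam k) := by
      rw [show ((-1:ℝ)^n) = ∏ _k : Fin n, (-1:ℝ) by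
          rw [Finset.prod_const, Finset.card_univ, Fintype.card_fin],
        ← Finset.prod_mul_distrib]
      exact Finset.prod_congr rfl fun k _ => by ring
    calc ∑ j, cauchyPsi n lam i j * BAux n lam j i
        = gAux n lam i * ∑ j, Q.eval (lam j) *
            ((lam j + lam i)⁻¹ * (∏ k ∈ Finset.univ.erase j, (lam j - lam k))⁻¹) := by
          rw [Finset.mul_sum]; exact Finset.sum_congr rfl fun j _ => key j
      _ = gAux n lam i * -(Q.eval (-lam i) * (∏ k, (-lam i - lam k))⁻¹) := by rw [hS]
      _ = 1 := by
          rw [hev0, hprod0, gAux, mul_inv, show (((-1:ℝ)^n)⁻¹) = (-1:ℝ)^n by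
            rw [← inv_pow, inv_neg, inv_one]]
          rw [show (∏ k, (lam i + lam k)) *
                (∏ k ∈ Finset.univ.erase i, (lam i - lam k))⁻¹ *
                -((-1:ℝ)^(n-1) * (∏ k ∈ Finset.univ.erase i, (lam i - lam k)) *
                  ((-1:ℝ)^n * (∏ k, (lam i + lam k))⁻¹)) =
              -((-1:ℝ)^(n-1) * (-1:ℝ)^n) *
                (((∏ k, (lam i + lam k)) * (∏ k, (lam i + lam k))⁻¹) *
                 ((∏ k ∈ Finset.univ.erase i, (lam i - lam k))⁻¹ *
                  (∏ k ∈ Finset.univ.erase i, (lam i - lam k)))) from by ring,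
            mul_inv_cancel₀ (hP i).ne', inv_mul_cancel₀ (hR i), ← pow_add,
            Odd.neg_one_pow ⟨n-1, by omega⟩]
          norm_num
  · -- off-diagonal entry is 0
    have hn2 : 2 ≤ n := by
      rcases Nat.lt_or_ge n 2 with h | h
      · exact absurd (Fin.ext (by omega : (i:ℕ) = (m:ℕ))) him
      · exact h
    set Q : ℝ[X] := ∏ k ∈ (Finset.univ.erase i).erase m, (X + C (lam k)) with hQdef
    have hQdeg : Q.natDegree = n - 2 := by
      rw [hQdef, Polynomial.natDegree_prod _ _ (fun k _ => Polynomial.X_add_C_ne_zero (lam k))]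
      simp only [Polynomial.natDegree_X_add_C]
      rw [Finset.sum_const, smul_eq_mul, mul_one, Finset.card_erase_of_mem
        (Finset.mem_erase.mpr ⟨Ne.symm him, Finset.mem_univ m⟩), Finset.card_erase_of_mem
        (Finset.mem_univ i), Finset.card_univ, Fintype.card_fin]
      omega
    set s : Finset ℝ := Finset.image lam Finset.univ with hsdef
    have hcard : s.card = n := by
      rw [hsdef, Finset.card_image_of_injective _ hinj, Finset.card_univ, Fintype.card_fin]
    have h0 := coeff_eq_sum_values s Q (by
      refine lt_of_le_of_lt Q.degree_le_natDegree ?_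
      rw [hQdeg, hcard]; exact_mod_cast (by omega : n - 2 < n))
    rw [hcard] at h0
    have hcoeff : Q.coeff (n - 1) = 0 :=
      Polynomial.coeff_eq_zero_of_natDegree_lt (by omega)
    rw [hcoeff, hsdef, Finset.sum_image (fun a _ b _ h => hinj h)] at h0
    have h0' : (0:ℝ) = ∑ j, Q.eval (lam j) * ∏ k ∈ Finset.univ.erase j, (lam j - lam k)⁻¹ := by
      rw [h0]
      refine Finset.sum_congr rfl fun j _ => ?_
      rw [← Finset.image_erase hinj, Finset.prod_image (fun a _ b _ h => hinj h)]
    have key : ∀ j : Fin n,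
        cauchyPsi n lam i j * BAux n lam j m =
          gAux n lam m * (Q.eval (lam j) * (∏ k ∈ Finset.univ.erase j, (lam j - lam k)⁻¹)) := by
      intro j
      have hev : Q.eval (lam j) = ∏ k ∈ (Finset.univ.erase i).erase m, (lam j + lam k) := by
        rw [hQdef, Polynomial.eval_prod]; simp
      have cancel : ∀ x y E R g : ℝ, x ≠ 0 → y ≠ 0 →
          x⁻¹ * (x * (y * E) * R * g / y) = g * (E * R) := by
        intros x y E R g hx hy; field_simp
      rw [cauchyPsi, BAux, Matrix.of_apply, Matrix.of_apply, gAux,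
        prodP_split i m j him, hev, ← Finset.prod_inv_distrib, one_div,
        add_comm (lam i) (lam j)]
      exact cancel _ _ _ _ _ (hsum j i) (hsum j m)
    rw [Matrix.one_apply_ne him]
    calc ∑ j, cauchyPsi n lam i j * BAux n lam j m
        = gAux n lam m * ∑ j, Q.eval (lam j) * ∏ k ∈ Finset.univ.erase j, (lam j - lam k)⁻¹ := by
          rw [Finset.mul_sum]; exact Finset.sum_congr rfl fun j _ => key j
      _ = 0 := by rw [← h0', mul_zero]
end

section
variable {n : ℕ} {lam : Fin n → ℝ}

lemma prodR_sign (hmono : StrictMono lam) (j : Fin n) :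
    0 < (-1:ℝ)^(n - 1 - (j:ℕ)) * ∏ k ∈ Finset.univ.erase j, (lam j - lam k) := by
  have hsplit : Finset.univ.erase j = Finset.Iio j ∪ Finset.Ioi j := by
    ext k
    simp only [Finset.mem_erase, Finset.mem_univ, and_true, Finset.mem_union,
      Finset.mem_Iio, Finset.mem_Ioi]
    constructor
    · intro h; rcases lt_or_gt_of_ne h with h' | h'
      · exact Or.inl h'
      · exact Or.inr h'
    · rintro (h | h) <;> [exact ne_of_lt h; exact ne_of_gt h]
  have hdisj : Disjoint (Finset.Iio j) (Finset.Ioi j) := by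
    rw [Finset.disjoint_left]
    intro a ha hb
    exact absurd (lt_trans (Finset.mem_Ioi.mp hb) (Finset.mem_Iio.mp ha)) (lt_irrefl j)
  rw [hsplit, Finset.prod_union hdisj]
  have h1 : 0 < ∏ k ∈ Finset.Iio j, (lam j - lam k) :=
    Finset.prod_pos fun k hk => sub_pos.mpr (hmono (Finset.mem_Iio.mp hk))
  have h2 : (∏ k ∈ Finset.Ioi j, (lam j - lam k)) =
      (-1:ℝ)^(n - 1 - (j:ℕ)) * ∏ k ∈ Finset.Ioi j, (lam k - lam j) := by
    rw [show ((-1:ℝ)^(n - 1 - (j:ℕ))) = ∏ _k ∈ Finset.Ioi j, (-1:ℝ) by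
        rw [Finset.prod_const, Fin.card_Ioi], ← Finset.prod_mul_distrib]
    exact Finset.prod_congr rfl fun k _ => by ring
  have h3 : 0 < ∏ k ∈ Finset.Ioi j, (lam k - lam j) :=
    Finset.prod_pos fun k hk => sub_pos.mpr (hmono (Finset.mem_Ioi.mp hk))
  rw [h2]
  calc (0:ℝ) < ((-1:ℝ)^(n - 1 - (j:ℕ)))^2 * ((∏ k ∈ Finset.Iio j, (lam j - lam k)) *
      ∏ k ∈ Finset.Ioi j, (lam k - lam j)) := by positivity
    _ = _ := by ring

lemma gAux_sign (hpos : ∀ i, 0 < lam i) (hmono : StrictMono lam) (j : Fin n) :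
    0 < (-1:ℝ)^(n - 1 - (j:ℕ)) * gAux n lam j := by
  rw [gAux, show (-1:ℝ)^(n - 1 - (j:ℕ)) * ((∏ k, (lam j + lam k)) *
      (∏ k ∈ Finset.univ.erase j, (lam j - lam k))⁻¹) =
    (∏ k, (lam j + lam k)) * ((-1:ℝ)^(n - 1 - (j:ℕ)) * (∏ k ∈ Finset.univ.erase j, (lam j - lam k))⁻¹) from by ring]
  have h2 : 0 < (-1:ℝ)^(n - 1 - (j:ℕ)) * (∏ k ∈ Finset.univ.erase j, (lam j - lam k))⁻¹ := by
    have := prodR_sign hmono j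
    rcases (mul_pos_iff.mp this) with ⟨ha, hb⟩ | ⟨ha, hb⟩
    · exact mul_pos ha (inv_pos.mpr hb)
    · exact mul_pos_of_neg_of_neg ha (inv_neg''.mpr hb)
  exact mul_pos (prodP_pos hpos j) h2

lemma BAux_sign (hpos : ∀ i, 0 < lam i) (hmono : StrictMono lam) (i j : Fin n) :
    0 < (-1:ℝ)^((i:ℕ)) * (-1:ℝ)^((j:ℕ)) * BAux n lam i j := by
  have hsign : ∀ k : Fin n, (-1:ℝ)^((k:ℕ)) * gAux n lam k =
      (-1:ℝ)^(n-1) * ((-1:ℝ)^(n - 1 - (k:ℕ)) * gAux n lam k) := by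
    intro k
    rw [← mul_assoc, ← pow_add,
      show (n-1) + (n - 1 - (k:ℕ)) = (k:ℕ) + 2 * (n - 1 - (k:ℕ)) by omega,
      pow_add, pow_mul, neg_one_sq, one_pow, mul_one]
  have h : (-1:ℝ)^((i:ℕ)) * (-1:ℝ)^((j:ℕ)) * BAux n lam i j =
      (((-1:ℝ)^(n-1))^2) *
        (((-1:ℝ)^(n - 1 - (i:ℕ)) * gAux n lam i) * ((-1:ℝ)^(n - 1 - (j:ℕ)) * gAux n lam j))
          / (lam i + lam j) := by
    rw [BAux, Matrix.of_apply]
    rw [show (-1:ℝ)^((i:ℕ)) * (-1:ℝ)^((j:ℕ)) * (gAux n lam i * gAux n lam j / (lam i + lam j)) =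
      ((-1:ℝ)^((i:ℕ)) * gAux n lam i) * ((-1:ℝ)^((j:ℕ)) * gAux n lam j) / (lam i + lam j) from by
        ring, hsign i, hsign j]
    ring
  rw [h, ← pow_mul, mul_comm (n-1) 2, pow_mul, neg_one_sq, one_pow, one_mul]
  exact div_pos (mul_pos (gAux_sign hpos hmono i) (gAux_sign hpos hmono j)) (sum_pos' hpos i j)

end

section
open MeasureTheory
variable {n : ℕ} {lam : Fin n → ℝ}

lemma psi_quad_nonneg (hpos : ∀ i, 0 < lam i) (x : Fin n → ℝ) :
    0 ≤ ∑ i, ∑ j, x i * x j * (1 / (lam i + lam j)) := by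
  have hEq : ∀ i j : Fin n, Set.EqOn (fun t : ℝ => t ^ (lam i + lam j - 1))
      (fun t : ℝ => t ^ (lam i - 1/2) * t ^ (lam j - 1/2)) (Set.Ioc (0:ℝ) 1) := by
    intro i j t ht
    simp only
    rw [← Real.rpow_add ht.1]
    ring_nf
  have hint : ∀ i j : Fin n,
      ∫ t in Set.Ioc (0:ℝ) 1, t ^ (lam i - 1/2) * t ^ (lam j - 1/2) = 1 / (lam i + lam j) := by
    intro i j
    rw [← setIntegral_congr_fun measurableSet_Ioc (hEq i j),
      ← intervalIntegral.integral_of_le (zero_le_one),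
      integral_rpow (Or.inl (by linarith [hpos i, hpos j] : (-1:ℝ) < lam i + lam j - 1)),
      show lam i + lam j - 1 + 1 = lam i + lam j by ring, Real.one_rpow,
      Real.zero_rpow (sum_pos' hpos i j).ne', sub_zero]
  have hintg : ∀ i j : Fin n, IntegrableOn
      (fun t : ℝ => t ^ (lam i - 1/2) * t ^ (lam j - 1/2)) (Set.Ioc (0:ℝ) 1) volume := by
    intro i j
    have h := intervalIntegral.intervalIntegrable_rpow'
      (show (-1:ℝ) < lam i + lam j - 1 by linarith [hpos i, hpos j]) (a := 0) (b := 1)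
    rw [intervalIntegrable_iff_integrableOn_Ioc_of_le zero_le_one] at h
    exact h.congr_fun (hEq i j) measurableSet_Ioc
  have key : ∑ i, ∑ j, x i * x j * (1 / (lam i + lam j)) =
      ∫ t in Set.Ioc (0:ℝ) 1, (∑ i, x i * t ^ (lam i - 1/2))^2 := by
    have h1 : ∀ i j : Fin n, x i * x j * (1 / (lam i + lam j)) =
        ∫ t in Set.Ioc (0:ℝ) 1, (x i * x j) * (t ^ (lam i - 1/2) * t ^ (lam j - 1/2)) := by
      intro i j
      rw [MeasureTheory.integral_const_mul, hint i j]
    calc ∑ i, ∑ j, x i * x j * (1 / (lam i + lam j))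
        = ∑ i, ∑ j, ∫ t in Set.Ioc (0:ℝ) 1,
            (x i * x j) * (t ^ (lam i - 1/2) * t ^ (lam j - 1/2)) :=
          Finset.sum_congr rfl fun i _ => Finset.sum_congr rfl fun j _ => h1 i j
      _ = ∑ i, ∫ t in Set.Ioc (0:ℝ) 1, ∑ j,
            (x i * x j) * (t ^ (lam i - 1/2) * t ^ (lam j - 1/2)) :=
          Finset.sum_congr rfl fun i _ =>
            (integral_finset_sum _ fun j _ => ((hintg i j).const_mul _)).symm
      _ = ∫ t in Set.Ioc (0:ℝ) 1, ∑ i, ∑ j,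
            (x i * x j) * (t ^ (lam i - 1/2) * t ^ (lam j - 1/2)) :=
          (integral_finset_sum _ fun i _ =>
            (integrable_finset_sum _ fun j _ => ((hintg i j).const_mul _))).symm
      _ = ∫ t in Set.Ioc (0:ℝ) 1, (∑ i, x i * t ^ (lam i - 1/2))^2 := by
          refine setIntegral_congr_fun measurableSet_Ioc fun t _ => ?_
          rw [sq, Finset.sum_mul_sum]
          exact Finset.sum_congr rfl fun i _ => Finset.sum_congr rfl fun j _ => by ring
  rw [key]
  exact setIntegral_nonneg measurableSet_Ioc fun t _ => sq_nonneg _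

end


/-- For every diagonal signature matrix `σ` (encoded by its diagonal `ε` with
`εᵢ = ±1`): `σ v*` is a unit vector, the smallest eigenvalue of `W(σ v*)` equals
`(1ᵀ σ* Ψ⁻¹ σ* 1)⁻¹`, and `σ σ* v*` is a unit eigenvector of `W(σ v*)` for this
smallest eigenvalue. -/
theorem optimal_actuators (n : ℕ) (hn : 0 < n) (lam : Fin n → ℝ)
    (hpos : ∀ i, 0 < lam i) (hmono : StrictMono lam)
    (ε : Fin n → ℝ) (hε : ∀ i, ε i = 1 ∨ ε i = -1) :
    (∑ i, (ε i * vStar n lam i) ^ 2 = 1) ∧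
    sInf (spectrum ℝ (cauchyW n lam fun i => ε i * vStar n lam i)) =
      ((fun _ : Fin n => (1 : ℝ)) ⬝ᵥ
        (sigmaStar n * (cauchyPsi n lam)⁻¹ * sigmaStar n).mulVec
          fun _ : Fin n => (1 : ℝ))⁻¹ ∧
    (∑ i, (ε i * (-1 : ℝ) ^ (i : ℕ) * vStar n lam i) ^ 2 = 1) ∧
    (cauchyW n lam fun i => ε i * vStar n lam i).mulVec
        (fun i => ε i * (-1 : ℝ) ^ (i : ℕ) * vStar n lam i) =
      sInf (spectrum ℝ (cauchyW n lam fun i => ε i * vStar n lam i)) •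
        fun i => ε i * (-1 : ℝ) ^ (i : ℕ) * vStar n lam i := by
  have hinj : Function.Injective lam := hmono.injective
  have hΨsymm : (cauchyPsi n lam)ᵀ = cauchyPsi n lam := by
    ext i j; simp only [Matrix.transpose_apply, cauchyPsi, Matrix.of_apply, add_comm]
  have hBsymm : (BAux n lam)ᵀ = BAux n lam := by
    ext i j
    simp only [Matrix.transpose_apply, BAux, Matrix.of_apply]
    rw [mul_comm (gAux n lam j), add_comm (lam j)]
  have hB : cauchyPsi n lam * BAux n lam = 1 := psi_mul_B hpos hinj
  have hB' : BAux n lam * cauchyPsi n lam = 1 := by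
    have h := congrArg Matrix.transpose hB
    rwa [Matrix.transpose_mul, hΨsymm, hBsymm, Matrix.transpose_one] at h
  have hinv : (cauchyPsi n lam)⁻¹ = BAux n lam := Matrix.inv_eq_right_inv hB
  set d : Fin n → ℝ := fun i => (-1 : ℝ) ^ (i : ℕ) with hd
  have hd2 : ∀ i, d i * d i = 1 := fun i => by
    simp only [hd, ← pow_add]; exact Even.neg_one_pow ⟨_, rfl⟩
  set u : Fin n → ℝ := fun i => ∑ j, d i * BAux n lam i j * d j with hu
  have hcij : ∀ i j, 0 < d i * BAux n lam i j * d j := by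
    intro i j
    have h := BAux_sign hpos hmono i j
    calc (0:ℝ) < (-1:ℝ)^((i:ℕ)) * (-1:ℝ)^((j:ℕ)) * BAux n lam i j := h
      _ = d i * BAux n lam i j * d j := by rw [hd]; ring
  have hupos : ∀ i, 0 < u i := fun i =>
    Finset.sum_pos (fun j _ => hcij i j) ⟨⟨0, hn⟩, Finset.mem_univ _⟩
  have hstat_u : ∀ i, (sigmaStar n * (cauchyPsi n lam)⁻¹ * sigmaStar n).mulVec
      (fun _ : Fin n => (1:ℝ)) i = u i := by
    intro i
    rw [hinv]
    have hent : ∀ j, (sigmaStar n * BAux n lam * sigmaStar n) i j =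
        d i * BAux n lam i j * d j := by
      intro j; rw [sigmaStar, Matrix.mul_diagonal, Matrix.diagonal_mul]
    simp only [Matrix.mulVec, dotProduct, mul_one, hu]
    exact Finset.sum_congr rfl fun j _ => hent j
  set S : ℝ := ∑ i, u i with hS
  have hSpos : 0 < S := Finset.sum_pos (fun i _ => hupos i) ⟨⟨0, hn⟩, Finset.mem_univ _⟩
  have hstat_S : ((fun _ : Fin n => (1:ℝ)) ⬝ᵥ
      (sigmaStar n * (cauchyPsi n lam)⁻¹ * sigmaStar n).mulVec fun _ : Fin n => (1:ℝ)) = S := by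
    simp only [dotProduct, one_mul]
    exact Finset.sum_congr rfl fun i _ => hstat_u i
  have hv : ∀ i, vStar n lam i = Real.sqrt (u i / S) := by
    intro i; rw [vStar, hstat_u, hstat_S]
  have hv2 : ∀ i, vStar n lam i ^ 2 = u i / S := fun i => by
    rw [hv i, Real.sq_sqrt (div_nonneg (hupos i).le hSpos.le)]
  have hvpos : ∀ i, 0 < vStar n lam i := fun i =>
    (hv i) ▸ Real.sqrt_pos.mpr (div_pos (hupos i) hSpos)
  have hε2 : ∀ i, ε i * ε i = 1 := fun i => by rcases hε i with h | h <;> rw [h] <;> norm_num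
  -- claim 1
  have claim1 : ∑ i, (ε i * vStar n lam i) ^ 2 = 1 := by
    have : ∀ i : Fin n, (ε i * vStar n lam i) ^ 2 = u i / S := fun i => by
      rw [mul_pow, ← hv2 i, sq (ε i), hε2 i, one_mul]
    rw [Finset.sum_congr rfl fun i _ => this i, ← Finset.sum_div, ← hS,
      div_self hSpos.ne']
  -- claim 3
  have claim3 : ∑ i, (ε i * (-1:ℝ) ^ (i:ℕ) * vStar n lam i) ^ 2 = 1 := by
    have : ∀ i : Fin n, (ε i * (-1:ℝ) ^ (i:ℕ) * vStar n lam i) ^ 2 = u i / S := fun i => by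
      have hdi : ((-1:ℝ) ^ (i:ℕ)) = d i := rfl
      rw [mul_pow, mul_pow, ← hv2 i, sq (ε i), hε2 i, hdi, sq (d i), hd2 i, one_mul, one_mul]
    rw [Finset.sum_congr rfl fun i _ => this i, ← Finset.sum_div, ← hS,
      div_self hSpos.ne']
  set b : Fin n → ℝ := fun i => ε i * vStar n lam i with hbdef
  set W : Matrix (Fin n) (Fin n) ℝ := cauchyW n lam b with hW
  set x : Fin n → ℝ := fun i => ε i * (-1:ℝ) ^ (i:ℕ) * vStar n lam i with hx
  have hWentry : ∀ i j, W i j = b i * cauchyPsi n lam i j * b j := by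
    intro i j
    rw [hW, cauchyW]
    simp only [Matrix.diagonal_mul, Matrix.mul_diagonal]
  have hb2 : ∀ i, b i * b i = u i / S := fun i => by
    rw [hbdef]
    calc ε i * vStar n lam i * (ε i * vStar n lam i)
        = (ε i * ε i) * (vStar n lam i ^ 2) := by ring
      _ = u i / S := by rw [hε2 i, hv2 i, one_mul]
  have hbx : ∀ j, b j * x j = d j * (u j / S) := by
    intro j
    rw [hbdef, hx]
    calc ε j * vStar n lam j * (ε j * (-1:ℝ)^(j:ℕ) * vStar n lam j)
        = (ε j * ε j) * (vStar n lam j ^ 2) * d j := by rw [hd]; ring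
      _ = d j * (u j / S) := by rw [hε2 j, hv2 j]; ring
  -- the eigenvector identity
  have hdu : (cauchyPsi n lam).mulVec (fun j => d j * u j) = d := by
    have h1 : (fun j => d j * u j) = (BAux n lam).mulVec d := by
      funext j
      rw [Matrix.mulVec, dotProduct, hu, Finset.mul_sum]
      exact Finset.sum_congr rfl fun k _ => by
        calc d j * (d j * BAux n lam j k * d k) = (d j * d j) * (BAux n lam j k * d k) := by ring
          _ = BAux n lam j k * d k := by rw [hd2 j, one_mul]
    rw [h1, Matrix.mulVec_mulVec, hB, Matrix.one_mulVec]
  have heig : W.mulVec x = S⁻¹ • x := by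
    funext i
    have expand : (W.mulVec x) i = b i * S⁻¹ * ∑ j, cauchyPsi n lam i j * (d j * u j) := by
      rw [Matrix.mulVec, dotProduct, Finset.mul_sum]
      refine Finset.sum_congr rfl fun j _ => ?_
      rw [hWentry i j]
      calc b i * cauchyPsi n lam i j * b j * x j
          = b i * cauchyPsi n lam i j * (b j * x j) := by ring
        _ = b i * cauchyPsi n lam i j * (d j * (u j / S)) := by rw [hbx j]
        _ = b i * S⁻¹ * (cauchyPsi n lam i j * (d j * u j)) := by ring
    have hΨd : ∑ j, cauchyPsi n lam i j * (d j * u j) = d i := congrFun hdu i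
    rw [expand, hΨd]
    have : x i = b i * d i := by
      rw [hbdef, hx, hd]; ring
    rw [Pi.smul_apply, smul_eq_mul, this]; ring
  have hdot_psi : ∀ a c : Fin n → ℝ, a ⬝ᵥ (cauchyPsi n lam).mulVec c =
      ∑ i, ∑ j, a i * c j * (1 / (lam i + lam j)) := by
    intro a c
    simp only [Matrix.mulVec, dotProduct, Finset.mul_sum]
    exact Finset.sum_congr rfl fun i _ => Finset.sum_congr rfl fun j _ => by
      rw [cauchyPsi, Matrix.of_apply]; ring
  have hΨpsd : ∀ w : Fin n → ℝ, 0 ≤ w ⬝ᵥ (cauchyPsi n lam).mulVec w := fun w => by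
    rw [hdot_psi]; exact psi_quad_nonneg hpos w
  have hsymdot : ∀ vv ww : Fin n → ℝ, vv ⬝ᵥ (cauchyPsi n lam).mulVec ww =
      ww ⬝ᵥ (cauchyPsi n lam).mulVec vv := by
    intro vv ww
    rw [hdot_psi, hdot_psi, Finset.sum_comm]
    exact Finset.sum_congr rfl fun i _ => Finset.sum_congr rfl fun j _ => by
      rw [add_comm (lam j)]; ring
  have hBji : ∀ i j, BAux n lam j i = BAux n lam i j := fun i j => by
    have h := congrFun (congrFun hBsymm i) j
    rwa [Matrix.transpose_apply] at h
  have hquad : ∀ z : Fin n → ℝ, S⁻¹ * (z ⬝ᵥ z) ≤ z ⬝ᵥ W.mulVec z := by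
    intro z
    set y : Fin n → ℝ := fun i => b i * z i with hy
    set p : Fin n → ℝ := fun i => y i / u i with hp
    have hpu : ∀ i, p i * u i = y i := fun i => by
      simp only [hp]; exact div_mul_cancel₀ _ (hupos i).ne'
    have hpyi : ∀ i, p i * y i = u i * (p i * p i) := by
      intro i
      rw [← hpu i]; ring
    have hpy : p ⬝ᵥ y = ∑ i, u i * (p i * p i) := by
      rw [dotProduct]
      exact Finset.sum_congr rfl fun i _ => hpyi i
    have hdom : p ⬝ᵥ (BAux n lam).mulVec p ≤ p ⬝ᵥ y := by
      have hterm : ∀ i j, p i * (BAux n lam i j * p j) ≤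
          d i * BAux n lam i j * d j * ((p i * p i + p j * p j) / 2) := by
        intro i j
        have e1 : d i * p i * (d i * p i) = p i * p i := by
          rw [show d i * p i * (d i * p i) = (d i * d i) * (p i * p i) by ring, hd2 i, one_mul]
        have e2 : d j * p j * (d j * p j) = p j * p j := by
          rw [show d j * p j * (d j * p j) = (d j * d j) * (p j * p j) by ring, hd2 j, one_mul]
        have hkey : p i * (BAux n lam i j * p j) =
            (d i * BAux n lam i j * d j) * ((d i * p i) * (d j * p j)) := by
          linear_combination (-(BAux n lam i j * p i * p j * (d j * d j))) * hd2 i +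
            (-(BAux n lam i j * p i * p j)) * hd2 j
        rw [hkey]
        have hc := hcij i j
        nlinarith [sq_nonneg (d i * p i - d j * p j), e1, e2]
      calc p ⬝ᵥ (BAux n lam).mulVec p
          = ∑ i, ∑ j, p i * (BAux n lam i j * p j) := by
            simp only [dotProduct, Matrix.mulVec, Finset.mul_sum]
        _ ≤ ∑ i, ∑ j, d i * BAux n lam i j * d j * ((p i * p i + p j * p j) / 2) :=
            Finset.sum_le_sum fun i _ => Finset.sum_le_sum fun j _ => hterm i j
        _ = (∑ i, ∑ j, d i * BAux n lam i j * d j * (p i * p i)) / 2 +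
            (∑ i, ∑ j, d i * BAux n lam i j * d j * (p j * p j)) / 2 := by
            rw [Finset.sum_div, Finset.sum_div, ← Finset.sum_add_distrib]
            refine Finset.sum_congr rfl fun i _ => ?_
            rw [Finset.sum_div, Finset.sum_div, ← Finset.sum_add_distrib]
            exact Finset.sum_congr rfl fun j _ => by ring
        _ = (∑ i, ∑ j, d i * BAux n lam i j * d j * (p i * p i)) / 2 +
            (∑ i, ∑ j, d i * BAux n lam i j * d j * (p i * p i)) / 2 := by
            congr 1
            rw [Finset.sum_comm]
            refine congrArg (· / 2) (Finset.sum_congr rfl fun i _ =>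
              Finset.sum_congr rfl fun j _ => ?_)
            rw [hBji i j]; ring
        _ = ∑ i, u i * (p i * p i) := by
            rw [add_halves]
            refine Finset.sum_congr rfl fun i _ => ?_
            rw [hu, Finset.sum_mul]
        _ = p ⬝ᵥ y := hpy.symm
    have hBp : (cauchyPsi n lam).mulVec ((BAux n lam).mulVec p) = p := by
      rw [Matrix.mulVec_mulVec, hB, Matrix.one_mulVec]
    have hw := hΨpsd (y - (BAux n lam).mulVec p)
    rw [Matrix.mulVec_sub, sub_dotProduct, dotProduct_sub,
      dotProduct_sub, hBp] at hw
    have hq1 : (BAux n lam).mulVec p ⬝ᵥ (cauchyPsi n lam).mulVec y = p ⬝ᵥ y := by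
      rw [hsymdot, hBp, dotProduct_comm]
    have hyp : y ⬝ᵥ p = p ⬝ᵥ y := dotProduct_comm y p
    have hq2 : (BAux n lam).mulVec p ⬝ᵥ p = p ⬝ᵥ (BAux n lam).mulVec p :=
      dotProduct_comm _ p
    rw [hq1, hyp, hq2] at hw
    -- hw : 0 ≤ y⬝Ψy - p⬝y - (p⬝y - p⬝Bp)
    have hzW : z ⬝ᵥ W.mulVec z = y ⬝ᵥ (cauchyPsi n lam).mulVec y := by
      simp only [dotProduct, Matrix.mulVec, Finset.mul_sum]
      refine Finset.sum_congr rfl fun i _ => Finset.sum_congr rfl fun j _ => ?_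
      rw [hWentry i j, hy]
      ring
    have hfinal : p ⬝ᵥ y = S⁻¹ * (z ⬝ᵥ z) := by
      rw [dotProduct, dotProduct, Finset.mul_sum]
      refine Finset.sum_congr rfl fun i _ => ?_
      have hb2i := hb2 i
      rw [hp, hy]
      have hui := (hupos i).ne'
      have hS1 : S * S⁻¹ = 1 := mul_inv_cancel₀ hSpos.ne'
      field_simp
      linear_combination (z i * z i * S) * hb2i + (z i * z i * u i) * hS1
    rw [hzW, ← hfinal]
    linarith [hw, hdom]

  -- x ≠ 0
  have hxne : x ≠ 0 := by
    intro h
    have := congrFun h ⟨0, hn⟩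
    simp only [hx, Pi.zero_apply] at this
    rcases mul_eq_zero.mp this with h' | h'
    · rcases mul_eq_zero.mp h' with h'' | h''
      · rcases hε ⟨0, hn⟩ with he | he <;> rw [he] at h'' <;> norm_num at h''
      · exact absurd h'' (by positivity)
    · exact absurd h' (hvpos _).ne'
  -- spectrum facts
  have hmem : S⁻¹ ∈ spectrum ℝ W := by
    rw [spectrum.mem_iff]
    intro hUnit
    have hA : (algebraMap ℝ (Matrix (Fin n) (Fin n) ℝ) S⁻¹ - W).mulVec x = 0 := by
      rw [Matrix.sub_mulVec, Algebra.algebraMap_eq_smul_one, Matrix.smul_mulVec,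
        Matrix.one_mulVec, heig, sub_self]
    have hdet0 : (algebraMap ℝ (Matrix (Fin n) (Fin n) ℝ) S⁻¹ - W).det = 0 :=
      Matrix.exists_mulVec_eq_zero_iff.mp ⟨x, hxne, hA⟩
    rw [Matrix.isUnit_iff_isUnit_det, hdet0] at hUnit
    exact hUnit.ne_zero rfl
  have hbound : ∀ μ ∈ spectrum ℝ W, S⁻¹ ≤ μ := by
    intro μ hμ
    rw [spectrum.mem_iff] at hμ
    have hdet0 : (algebraMap ℝ (Matrix (Fin n) (Fin n) ℝ) μ - W).det = 0 := by
      by_contra h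
      exact hμ ((Matrix.isUnit_iff_isUnit_det _).mpr (isUnit_iff_ne_zero.mpr h))
    obtain ⟨yv, hy0, hyeq⟩ := Matrix.exists_mulVec_eq_zero_iff.mpr hdet0
    have hWy : W.mulVec yv = μ • yv := by
      rw [Matrix.sub_mulVec, Algebra.algebraMap_eq_smul_one, Matrix.smul_mulVec,
        Matrix.one_mulVec, sub_eq_zero] at hyeq
      exact hyeq.symm
    have hyy : 0 < yv ⬝ᵥ yv := by
      obtain ⟨i, hi⟩ := Function.ne_iff.mp hy0
      exact lt_of_lt_of_le (mul_self_pos.mpr hi)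
        (Finset.single_le_sum (f := fun j => yv j * yv j)
          (fun j _ => mul_self_nonneg _) (Finset.mem_univ i))
    have h1 := hquad yv
    rw [hWy, dotProduct_smul, smul_eq_mul] at h1
    nlinarith
  have claim2 : sInf (spectrum ℝ W) = S⁻¹ :=
    le_antisymm (csInf_le ⟨S⁻¹, fun μ hμ => hbound μ hμ⟩ hmem)
      (le_csInf (Set.nonempty_of_mem hmem) hbound)
  refine ⟨claim1, by rw [hstat_S]; exact claim2, claim3, ?_⟩
  rw [claim2]
  exact heig
end
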